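/- Let d ≥ 1 and let P, Q be complex polynomials such that: (1) deg P ≤ d and deg Q ≤ d−1; (2) every monomial of P has exponent congruent to d mod 2 and every monomial of Q has exponent congruent to (d−1) mod 2; (3) |P(x)|² + (1−x²)|Q(x)|² = 1 for all x ∈ [−1,1]. Then there exist phase factors Ψ = (ψ_0, …, ψ_d) ∈ ℝ^{d+1} such that for all x ∈ [−1,1], U(x,Ψ) = [[P(x), i√(1−x²)·Q(x)], [i√(1−x²)·Q*(x), P*(x)]], where P*, Q* denote the polynomials obtained by complex-conjugating all coefficients of P, Q. -/

import Mathlib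

open Matrix Polynomial Complex

/-- The Pauli X matrix. -/
noncomputable def PX : Matrix (Fin 2) (Fin 2) ℂ := !![0, 1; 1, 0]

/-- The Pauli Z matrix. -/
noncomputable def PZ : Matrix (Fin 2) (Fin 2) ℂ := !![1, 0; 0, -1]

/-- The QSP unitary `U(x, Ψ) = e^{iψ₀Z} ∏_{j=1}^d e^{i arccos(x) X} e^{iψⱼ Z}`,
the product taken with `j` increasing from left to right. -/
noncomputable def qspU (d : ℕ) (Ψ : Fin (d + 1) → ℝ) (x : ℝ) : Matrix (Fin 2) (Fin 2) ℂ :=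
  NormedSpace.exp ((Complex.I * (Ψ 0 : ℂ)) • PZ) *
    ((List.finRange d).map (fun j =>
      NormedSpace.exp ((Complex.I * (Real.arccos x : ℂ)) • PX) *
      NormedSpace.exp ((Complex.I * ((Ψ j.succ : ℝ) : ℂ)) • PZ))).prod

/-- The matrix `[[P(x), i√(1-x²) Q(x)], [i√(1-x²) Q*(x), P*(x)]]`, where `P*`, `Q*` have
complex-conjugated coefficients. -/
noncomputable def qspMat (P Q : Polynomial ℂ) (x : ℝ) : Matrix (Fin 2) (Fin 2) ℂ :=
  !![P.eval (x : ℂ), Complex.I * (Real.sqrt (1 - x ^ 2) : ℂ) * Q.eval (x : ℂ);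
     Complex.I * (Real.sqrt (1 - x ^ 2) : ℂ) * (Q.map (starRingEnd ℂ)).eval (x : ℂ),
     (P.map (starRingEnd ℂ)).eval (x : ℂ)]

lemma expZ (t : ℂ) : NormedSpace.exp (t • PZ) =
    !![Complex.exp t, 0; 0, Complex.exp (-t)] := by
  have h : t • PZ = Matrix.diagonal ![t, -t] := by
    ext i j; fin_cases i <;> fin_cases j <;> simp [PZ, Matrix.diagonal]
  rw [h, Matrix.exp_diagonal]
  ext i j; fin_cases i <;> fin_cases j <;>
    simp [Matrix.diagonal, ← Complex.exp_eq_exp_ℂ]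

lemma expX (t : ℂ) : NormedSpace.exp (t • PX) =
    !![(Complex.exp t + Complex.exp (-t))/2, (Complex.exp t - Complex.exp (-t))/2;
       (Complex.exp t - Complex.exp (-t))/2, (Complex.exp t + Complex.exp (-t))/2] := by
  have hS : IsUnit (!![1, 1; 1, -1] : Matrix (Fin 2) (Fin 2) ℂ) := by
    rw [Matrix.isUnit_iff_isUnit_det]
    simp [Matrix.det_fin_two_of]
    norm_num
  have hSinv : (!![1, 1; 1, -1] : Matrix (Fin 2) (Fin 2) ℂ)⁻¹ = !![1/2, 1/2; 1/2, -(1/2)] := by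
    apply Matrix.inv_eq_right_inv
    rw [Matrix.mul_fin_two, Matrix.one_fin_two]
    norm_num
  have h : t • PX = !![1, 1; 1, -1] * Matrix.diagonal ![t, -t] *
      (!![1, 1; 1, -1] : Matrix (Fin 2) (Fin 2) ℂ)⁻¹ := by
    rw [hSinv]
    ext i j
    fin_cases i <;> fin_cases j <;>
      simp [PX, Matrix.vecMul_diagonal, Matrix.mul_apply, Fin.sum_univ_two] <;> ring
  rw [h, Matrix.exp_conj _ _ hS, Matrix.exp_diagonal, hSinv]
  ext i j
  fin_cases i <;> fin_cases j <;>
    simp [Matrix.vecMul_diagonal, Matrix.mul_apply, Fin.sum_univ_two,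
      ← Complex.exp_eq_exp_ℂ] <;> ring

lemma qspU_zero (Ψ : Fin 1 → ℝ) (x : ℝ) :
    qspU 0 Ψ x = NormedSpace.exp ((Complex.I * (Ψ 0 : ℂ)) • PZ) := by
  simp [qspU]

lemma qspU_succ (e : ℕ) (Ψ : Fin (e + 2) → ℝ) (x : ℝ) :
    qspU (e + 1) Ψ x = qspU e (fun j => Ψ j.castSucc) x *
      (NormedSpace.exp ((Complex.I * (Real.arccos x : ℂ)) • PX) *
       NormedSpace.exp ((Complex.I * ((Ψ (Fin.last (e + 1)) : ℝ) : ℂ)) • PZ)) := by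
  unfold qspU
  rw [List.finRange_succ_last, List.map_append, List.prod_append, List.map_map]
  simp [mul_assoc, Function.comp_def, Fin.succ_castSucc, -Fin.castSucc_succ]

lemma qsp_step_mat (u v a b ca cb z t : ℂ) (hu : u * v = 1) (ht : t ^ 2 = z ^ 2 - 1) :
    (!![a, t * b; t * cb, ca] : Matrix (Fin 2) (Fin 2) ℂ) =
      !![v * (a * z) + u * (b - b * z ^ 2), t * (u * (b * z) - v * a);
         t * (v * (cb * z) - u * ca), u * (ca * z) + v * (cb - cb * z ^ 2)] *
      !![z * u, t * v; t * u, z * v] := by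
  rw [Matrix.mul_fin_two]
  ext i j
  fin_cases i <;> fin_cases j <;> simp
  · linear_combination (-a) * hu + (-(u * (u * (b * z) - v * a))) * ht
  · linear_combination (-(t * b)) * hu
  · linear_combination (-(t * cb)) * hu
  · linear_combination (-ca) * hu + (-(v * (v * (cb * z) - u * ca))) * ht

lemma conj_eval (p : Polynomial ℂ) (x : ℝ) :
    (p.map (starRingEnd ℂ)).eval (x : ℂ) = (starRingEnd ℂ) (p.eval (x : ℂ)) := by
  induction p using Polynomial.induction_on' with
  | add f g hf hg => simp [hf, hg]
  | monomial n a => simp [← Complex.ofReal_pow]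

lemma coeff_mul_X' (p : Polynomial ℂ) (n : ℕ) :
    (p * X).coeff n = if 1 ≤ n then p.coeff (n - 1) else 0 := by
  rw [← pow_one (X : Polynomial ℂ), Polynomial.coeff_mul_X_pow']

lemma qsp_aux (d : ℕ) : ∀ (P Q : Polynomial ℂ), P.natDegree ≤ d → Q.natDegree ≤ d - 1 →
    (∀ n : ℕ, P.coeff n ≠ 0 → n % 2 = d % 2) →
    (∀ n : ℕ, Q.coeff n ≠ 0 → n % 2 = (d - 1) % 2) →
    (P * P.map (starRingEnd ℂ) +
      (1 - X ^ 2) * (Q * Q.map (starRingEnd ℂ)) = 1) →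
    ∃ Ψ : Fin (d + 1) → ℝ,
      ∀ x : ℝ, x ∈ Set.Icc (-1 : ℝ) 1 → qspU d Ψ x = qspMat P Q x := by
  induction d with
  | zero =>
    intro P Q hdP hdQ _ _ hid
    have hdQ' : Q.natDegree ≤ 0 := by simpa using hdQ
    obtain ⟨p, rfl⟩ : ∃ p, P = C p := ⟨P.coeff 0, Polynomial.eq_C_of_natDegree_le_zero hdP⟩
    obtain ⟨q, rfl⟩ : ∃ q, Q = C q := ⟨Q.coeff 0, Polynomial.eq_C_of_natDegree_le_zero hdQ'⟩
    have h1 : p * (starRingEnd ℂ) p = 1 := by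
      have := congrArg (Polynomial.eval (1 : ℂ)) hid
      simpa using this
    have h0 : q * (starRingEnd ℂ) q = 0 := by
      have := congrArg (Polynomial.eval (0 : ℂ)) hid
      simp at this
      linear_combination this - h1
    have hq0 : q = 0 := by
      have : Complex.normSq q = 0 := by
        have := h0; rw [Complex.mul_conj] at this; exact_mod_cast this
      exact Complex.normSq_eq_zero.mp this
    have hpabs : ‖p‖ = 1 := by
      have : (Complex.normSq p : ℂ) = 1 := by rw [← Complex.mul_conj, h1]
      have h2 : Complex.normSq p = 1 := by exact_mod_cast this
      rw [Complex.norm_def, h2, Real.sqrt_one]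
    use fun _ => Complex.arg p
    intro x hx
    rw [qspU_zero, expZ]
    have hp : Complex.exp (Complex.I * (Complex.arg p : ℂ)) = p := by
      rw [mul_comm]
      have := Complex.norm_mul_exp_arg_mul_I p
      rwa [hpabs, Complex.ofReal_one, one_mul] at this
    have hcp : Complex.exp (-(Complex.I * (Complex.arg p : ℂ))) = (starRingEnd ℂ) p := by
      have h8 := congrArg (starRingEnd ℂ) hp
      rw [← Complex.exp_conj] at h8
      rw [← h8]
      congr 1
      simp
    rw [qspMat]
    ext i j
    fin_cases i <;> fin_cases j <;> simp [hq0, hp, hcp]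
  | succ e ih =>
    intro P Q hdP hdQ hpP hpQ hid
    have hdQe : Q.natDegree ≤ e := by simpa using hdQ
    have hpQe : ∀ n : ℕ, Q.coeff n ≠ 0 → n % 2 = e % 2 := by simpa using hpQ
    set cc := starRingEnd ℂ with hcc
    set p := P.coeff (e + 1) with hp
    set q := Q.coeff e with hq
    have hPz : ∀ n, e + 1 < n → P.coeff n = 0 := fun n h =>
      Polynomial.coeff_eq_zero_of_natDegree_lt (lt_of_le_of_lt hdP h)
    have hQz : ∀ n, e < n → Q.coeff n = 0 := fun n h =>
      Polynomial.coeff_eq_zero_of_natDegree_lt (lt_of_le_of_lt hdQe h)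
    have hPpar : ∀ n, n % 2 ≠ (e + 1) % 2 → P.coeff n = 0 := by
      intro n h; by_contra h'; exact h (hpP n h')
    have hQpar : ∀ n, n % 2 ≠ e % 2 → Q.coeff n = 0 := by
      intro n h; by_contra h'; exact h (hpQe n h')
    have hpq : p * cc p = q * cc q := by
      have h2 := congrArg (fun r => Polynomial.coeff r (2 * e + 2)) hid
      have e1 : (P * P.map cc).coeff (2 * e + 2) = p * cc p := by
        have := Polynomial.coeff_mul_add_eq_of_natDegree_le (f := P) (g := P.map cc)
          (df := e + 1) (dg := e + 1) hdP (Polynomial.natDegree_map_le.trans hdP)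
        rw [show (e + 1) + (e + 1) = 2 * e + 2 by ring] at this
        rw [this, Polynomial.coeff_map]
      have e2 : ((1 - X ^ 2) * (Q * Q.map cc)).coeff (2 * e + 2) = -(q * cc q) := by
        have hre : (1 - X ^ 2) * (Q * Q.map cc) =
            Q * Q.map cc - (Q * Q.map cc) * X ^ 2 := by ring
        have e3 : (Q * Q.map cc).coeff (2 * e + 2) = 0 := by
          apply Polynomial.coeff_eq_zero_of_natDegree_lt
          calc (Q * Q.map cc).natDegree ≤ Q.natDegree + (Q.map cc).natDegree :=
                Polynomial.natDegree_mul_le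
            _ ≤ e + e := add_le_add hdQe (Polynomial.natDegree_map_le.trans hdQe)
            _ < 2 * e + 2 := by omega
        have e4 : (Q * Q.map cc).coeff (2 * e) = q * cc q := by
          have := Polynomial.coeff_mul_add_eq_of_natDegree_le (f := Q) (g := Q.map cc)
            (df := e) (dg := e) hdQe (Polynomial.natDegree_map_le.trans hdQe)
          rw [show e + e = 2 * e by ring] at this
          rw [this, Polynomial.coeff_map]
        rw [hre, Polynomial.coeff_sub, e3, Polynomial.coeff_mul_X_pow',
          if_pos (by omega : 2 ≤ 2 * e + 2), show 2 * e + 2 - 2 = 2 * e by omega, e4]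
        ring
      rw [Polynomial.coeff_add, e1, e2, Polynomial.coeff_one] at h2
      simp at h2
      linear_combination h2
    obtain ⟨ψ, hψ⟩ : ∃ ψ : ℝ, Complex.exp (Complex.I * (ψ : ℂ)) *
        (Complex.exp (Complex.I * (ψ : ℂ)) * q) = p := by
      by_cases hq0 : q = 0
      · refine ⟨0, ?_⟩
        have hpp : p * cc p = 0 := by rw [hpq, hq0]; ring
        have hp0 : p = 0 := by
          have : Complex.normSq p = 0 := by
            rw [hcc] at hpp; rw [Complex.mul_conj] at hpp; exact_mod_cast hpp
          exact Complex.normSq_eq_zero.mp this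
        simp [hq0, hp0]
      · have habs : ‖p‖ = ‖q‖ := by
          have h3 : (Complex.normSq p : ℂ) = (Complex.normSq q : ℂ) := by
            rw [← Complex.mul_conj, ← Complex.mul_conj]; exact hpq
          have h4 : Complex.normSq p = Complex.normSq q := by exact_mod_cast h3
          rw [Complex.norm_def, Complex.norm_def, h4]
        refine ⟨(p / q).arg / 2, ?_⟩
        have h5 : Complex.exp (Complex.I * (((p / q).arg / 2 : ℝ) : ℂ)) *
            Complex.exp (Complex.I * (((p / q).arg / 2 : ℝ) : ℂ)) =
            Complex.exp (((p / q).arg : ℂ) * Complex.I) := by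
          rw [← Complex.exp_add]
          congr 1
          push_cast
          ring
        have h6 : Complex.exp (((p / q).arg : ℂ) * Complex.I) = p / q := by
          have h7 := Complex.norm_mul_exp_arg_mul_I (p / q)
          rwa [norm_div, habs, div_self (norm_ne_zero_iff.mpr hq0),
            Complex.ofReal_one, one_mul] at h7
        rw [← mul_assoc, h5, h6, div_mul_cancel₀ _ hq0]
    set u := Complex.exp (Complex.I * (ψ : ℂ)) with hudef
    have hcu : cc u = Complex.exp (-(Complex.I * (ψ : ℂ))) := by
      rw [hudef, hcc, ← Complex.exp_conj]
      congr 1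
      simp
    have hu : u * cc u = 1 := by
      rw [hcu, ← Complex.exp_add, add_neg_cancel, Complex.exp_zero]
    -- the reduced polynomials
    set P' : Polynomial ℂ := C (cc u) * (P * X) + C u * (Q - Q * X ^ 2) with hP'def
    set Q' : Polynomial ℂ := C u * (Q * X) - C (cc u) * P with hQ'def
    have cP' : ∀ n, P'.coeff n = cc u * (if 1 ≤ n then P.coeff (n - 1) else 0) +
        u * (Q.coeff n - (if 2 ≤ n then Q.coeff (n - 2) else 0)) := by
      intro n
      rw [hP'def]
      rw [Polynomial.coeff_add, Polynomial.coeff_C_mul, Polynomial.coeff_C_mul,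
        Polynomial.coeff_sub, coeff_mul_X', Polynomial.coeff_mul_X_pow']
    have cQ' : ∀ n, Q'.coeff n = u * (if 1 ≤ n then Q.coeff (n - 1) else 0) -
        cc u * P.coeff n := by
      intro n
      rw [hQ'def]
      rw [Polynomial.coeff_sub, Polynomial.coeff_C_mul, Polynomial.coeff_C_mul, coeff_mul_X']
    have hdP' : P'.natDegree ≤ e := by
      rw [Polynomial.natDegree_le_iff_coeff_eq_zero]
      intro m hm
      rw [cP' m]
      by_cases h1 : m = e + 1
      · subst h1
        rw [if_pos (by omega), show e + 1 - 1 = e by omega, hPpar e (by omega),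
          hQz (e + 1) (by omega)]
        split_ifs with h2
        · rw [hQpar (e + 1 - 2) (by omega)]; ring
        · ring
      · by_cases h2 : m = e + 2
        · subst h2
          rw [if_pos (by omega), if_pos (by omega), hQz (e + 2) (by omega),
            show e + 2 - 1 = e + 1 by omega, show e + 2 - 2 = e by omega, ← hp, ← hq]
          linear_combination (u * q) * hu - (cc u) * hψ
        · rw [if_pos (by omega), hPz (m - 1) (by omega), hQz m (by omega)]
          split_ifs with h3
          · rw [hQz (m - 2) (by omega)]; ring
          · ring
    have hdQ' : Q'.natDegree ≤ e - 1 := by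
      rw [Polynomial.natDegree_le_iff_coeff_eq_zero]
      intro m hm
      rw [cQ' m]
      by_cases h1 : m = e + 1
      · subst h1
        rw [if_pos (by omega), show e + 1 - 1 = e by omega, ← hp, ← hq]
        linear_combination (cc u) * hψ - (u * q) * hu
      · by_cases h2 : m = e
        · rw [h2, if_pos (by omega : 1 ≤ e), hQpar (e - 1) (by omega), hPpar e (by omega)]
          ring
        · rw [hPz m (by omega), if_pos (by omega), hQz (m - 1) (by omega)]
          ring
    have hpP' : ∀ n : ℕ, P'.coeff n ≠ 0 → n % 2 = e % 2 := by
      intro n hn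
      by_contra hcon
      apply hn
      rw [cP' n]
      have hQn : Q.coeff n = 0 := hQpar n hcon
      rw [hQn]
      split_ifs with h1 h2 h2
      · rw [hPpar (n - 1) (by omega), hQpar (n - 2) (by omega)]; ring
      · rw [hPpar (n - 1) (by omega)]; ring
      · omega
      · ring
    have hpQ' : ∀ n : ℕ, Q'.coeff n ≠ 0 → n % 2 = (e - 1) % 2 := by
      intro n hn
      have hne : n ≤ e - 1 := (Polynomial.le_natDegree_of_ne_zero hn).trans hdQ'
      rcases Nat.eq_zero_or_pos e with he | he
      · omega
      · by_contra hcon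
        apply hn
        rw [cQ' n, hPpar n (by omega)]
        split_ifs with h1
        · rw [hQpar (n - 1) (by omega)]; ring
        · ring
    have hmapP' : P'.map cc = C u * (P.map cc * X) + C (cc u) * (Q.map cc - Q.map cc * X ^ 2) := by
      rw [hP'def]
      simp only [Polynomial.map_add, Polynomial.map_mul, Polynomial.map_sub,
        Polynomial.map_pow, Polynomial.map_C, Polynomial.map_X, hcc]
      rw [Complex.conj_conj]
    have hmapQ' : Q'.map cc = C (cc u) * (Q.map cc * X) - C u * (P.map cc) := by
      rw [hQ'def]
      simp only [Polynomial.map_sub, Polynomial.map_mul, Polynomial.map_C, Polynomial.map_X, hcc]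
      rw [Complex.conj_conj]
    have huC : (C u : Polynomial ℂ) * C (cc u) = 1 := by
      rw [← Polynomial.C_mul, hu, Polynomial.C_1]
    have hid' : P' * P'.map cc + (1 - X ^ 2) * (Q' * Q'.map cc) = 1 := by
      rw [hP'def, hQ'def, hmapP', hmapQ']
      linear_combination (C u * C (cc u)) * hid + huC
    obtain ⟨Ψ', hΨ'⟩ := ih P' Q' hdP' hdQ' hpP' hpQ' hid'
    refine ⟨Fin.snoc Ψ' ψ, fun x hx => ?_⟩
    rw [qspU_succ]
    simp only [Fin.snoc_castSucc, Fin.snoc_last]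
    rw [hΨ' x hx]
    -- now the matrix computation
    obtain ⟨hx1, hx2⟩ := hx
    set s : ℝ := Real.sqrt (1 - x ^ 2) with hs
    have hs2 : (s : ℂ) ^ 2 = 1 - (x : ℂ) ^ 2 := by
      have h9 : s ^ 2 = 1 - x ^ 2 := Real.sq_sqrt (by nlinarith)
      exact_mod_cast congrArg (fun r : ℝ => (r : ℂ)) h9
    have ht : (Complex.I * (s : ℂ)) ^ 2 = (x : ℂ) ^ 2 - 1 := by
      rw [mul_pow, Complex.I_sq, hs2]; ring
    have hW : NormedSpace.exp ((Complex.I * ((Real.arccos x : ℝ) : ℂ)) • PX) =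
        !![(x : ℂ), Complex.I * (s : ℂ); Complex.I * (s : ℂ), (x : ℂ)] := by
      rw [expX]
      have h1 : Complex.exp (Complex.I * ((Real.arccos x : ℝ) : ℂ)) =
          Complex.cos ((Real.arccos x : ℝ) : ℂ) +
          Complex.sin ((Real.arccos x : ℝ) : ℂ) * Complex.I := by
        rw [mul_comm, Complex.exp_mul_I]
      have h2 : Complex.exp (-(Complex.I * ((Real.arccos x : ℝ) : ℂ))) =
          Complex.cos ((Real.arccos x : ℝ) : ℂ) -
          Complex.sin ((Real.arccos x : ℝ) : ℂ) * Complex.I := by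
        rw [show -(Complex.I * ((Real.arccos x : ℝ) : ℂ)) =
          (-((Real.arccos x : ℝ) : ℂ)) * Complex.I by ring, Complex.exp_mul_I,
          Complex.cos_neg, Complex.sin_neg]
        ring
      have hcos : Complex.cos ((Real.arccos x : ℝ) : ℂ) = (x : ℂ) := by
        rw [← Complex.ofReal_cos, Real.cos_arccos hx1 hx2]
      have hsin : Complex.sin ((Real.arccos x : ℝ) : ℂ) = (s : ℂ) := by
        rw [← Complex.ofReal_sin, Real.sin_arccos, hs]
      rw [h1, h2, hcos, hsin]
      ext i j
      fin_cases i <;> fin_cases j <;> simp <;> try ring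
    have hE : NormedSpace.exp ((Complex.I * ((ψ : ℝ) : ℂ)) • PZ) =
        !![u, 0; 0, cc u] := by
      rw [expZ, hcu, hudef]
    rw [hW, hE]
    have hWE : (!![(x : ℂ), Complex.I * (s : ℂ); Complex.I * (s : ℂ), (x : ℂ)] *
        !![u, 0; 0, cc u] : Matrix (Fin 2) (Fin 2) ℂ) =
        !![(x : ℂ) * u, Complex.I * (s : ℂ) * cc u;
           Complex.I * (s : ℂ) * u, (x : ℂ) * cc u] := by
      rw [Matrix.mul_fin_two]
      ext i j
      fin_cases i <;> fin_cases j <;> simp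
    rw [hWE]
    have evalP' : P'.eval (x : ℂ) = cc u * (P.eval (x : ℂ) * (x : ℂ)) +
        u * (Q.eval (x : ℂ) - Q.eval (x : ℂ) * (x : ℂ) ^ 2) := by
      rw [hP'def]; simp; try ring
    have evalQ' : Q'.eval (x : ℂ) = u * (Q.eval (x : ℂ) * (x : ℂ)) -
        cc u * P.eval (x : ℂ) := by
      rw [hQ'def]; simp
    have evalP'c : (P'.map cc).eval (x : ℂ) = u * ((P.map cc).eval (x : ℂ) * (x : ℂ)) +
        cc u * ((Q.map cc).eval (x : ℂ) - (Q.map cc).eval (x : ℂ) * (x : ℂ) ^ 2) := by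
      rw [hmapP']; simp; try ring
    have evalQ'c : (Q'.map cc).eval (x : ℂ) = cc u * ((Q.map cc).eval (x : ℂ) * (x : ℂ)) -
        u * ((P.map cc).eval (x : ℂ)) := by
      rw [hmapQ']; simp
    have key := qsp_step_mat u (cc u) (P.eval (x : ℂ)) (Q.eval (x : ℂ))
      ((P.map cc).eval (x : ℂ)) ((Q.map cc).eval (x : ℂ)) (x : ℂ) (Complex.I * (s : ℂ)) hu ht
    show qspMat P' Q' x * _ = qspMat P Q x
    rw [show qspMat P' Q' x = !![P'.eval (x : ℂ), Complex.I * (s : ℂ) * Q'.eval (x : ℂ);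
      Complex.I * (s : ℂ) * (Q'.map cc).eval (x : ℂ), (P'.map cc).eval (x : ℂ)] from rfl]
    rw [evalP', evalQ', evalP'c, evalQ'c]
    rw [show qspMat P Q x = !![P.eval (x : ℂ), Complex.I * (s : ℂ) * Q.eval (x : ℂ);
      Complex.I * (s : ℂ) * (Q.map cc).eval (x : ℂ), (P.map cc).eval (x : ℂ)] from rfl]
    exact key.symm

/-- QSP representation, converse direction: given complex polynomials `P, Q`
with the stated degree, parity and normalization conditions (`d ≥ 1`), there exists a set of
phase factors `Ψ ∈ ℝ^{d+1}` realizing `P, Q` via the QSP matrix form on `[-1,1]`. -/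
theorem qsp_exists_phase_factors (d : ℕ) (hd : 1 ≤ d) (P Q : Polynomial ℂ)
    (hdegP : P.natDegree ≤ d)
    (hdegQ : Q.natDegree ≤ d - 1)
    (hparP : ∀ n : ℕ, P.coeff n ≠ 0 → n % 2 = d % 2)
    (hparQ : ∀ n : ℕ, Q.coeff n ≠ 0 → n % 2 = (d - 1) % 2)
    (hnorm : ∀ x : ℝ, x ∈ Set.Icc (-1 : ℝ) 1 →
      ‖P.eval (x : ℂ)‖ ^ 2
        + (1 - x ^ 2) * ‖Q.eval (x : ℂ)‖ ^ 2 = 1) :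
    ∃ Ψ : Fin (d + 1) → ℝ,
      ∀ x : ℝ, x ∈ Set.Icc (-1 : ℝ) 1 → qspU d Ψ x = qspMat P Q x := by
  apply qsp_aux d P Q hdegP hdegQ hparP hparQ
  -- derive the polynomial identity from the pointwise normalization
  have hroot : ∀ x : ℝ, x ∈ Set.Icc (-1 : ℝ) 1 →
      (P * P.map (starRingEnd ℂ) + (1 - X ^ 2) * (Q * Q.map (starRingEnd ℂ)) - 1).IsRoot
        (x : ℂ) := by
    intro x hx
    have h1 := hnorm x hx
    rw [Complex.sq_norm, Complex.sq_norm] at h1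
    have h2 := congrArg (fun r : ℝ => (r : ℂ)) h1
    push_cast at h2
    rw [Polynomial.IsRoot]
    simp only [Polynomial.eval_sub, Polynomial.eval_add, Polynomial.eval_mul,
      Polynomial.eval_one, Polynomial.eval_pow, Polynomial.eval_X, conj_eval]
    rw [Complex.mul_conj, Complex.mul_conj]
    rw [sub_eq_zero]
    linear_combination h2
  have hinf : Set.Infinite
      {z : ℂ | (P * P.map (starRingEnd ℂ) +
        (1 - X ^ 2) * (Q * Q.map (starRingEnd ℂ)) - 1).IsRoot z} := by
    apply Set.Infinite.mono (s := (fun x : ℝ => (x : ℂ)) '' Set.Icc (-1 : ℝ) 1)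
    · rintro z ⟨x, hx, rfl⟩
      exact hroot x hx
    · exact Set.Infinite.image
        (Set.injOn_of_injective Complex.ofReal_injective)
        (Set.Icc_infinite (by norm_num))
  have h0 := Polynomial.eq_zero_of_infinite_isRoot _ hinf
  rwa [sub_eq_zero] at h0
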